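/- arXiv:0807.3502 — 4 statements merged into one kernel-verified Lean document; each statement's English description precedes it below -/
import Mathlib

section
/- In the folding setup, suppose the Γ-orbit Γ·j of an index j ∈ ι consists of pairwise non-adjacent vertices, i.e. for all distinct k, l ∈ Γ·j one has ¬Adj(k,l). Then B(e_j, e_j) = 2/|Γ·j| (in particular B(e_j, e_j) ≠ 0), and for every i ∈ ι with i ∉ Γ·j one has 2·B(e_j, e_i)/B(e_j, e_j) = Σ_{k ∈ Γ·j} B(f_k, f_i). -/
theorem stmt_1 (ι : Type*) [Fintype ι] [DecidableEq ι]
    (Adj : ι → ι → Prop)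
    (hAdjSymm : ∀ i j, Adj i j → Adj j i)
    (hAdjIrr : ∀ i, ¬ Adj i i)
    (B : LinearMap.BilinForm ℚ (ι → ℚ))
    (hBsymm : ∀ v w, B v w = B w v)
    (hBdiag : ∀ i : ι, B (Pi.single i 1) (Pi.single i 1) = 2)
    (hBadj : ∀ i j : ι, i ≠ j → Adj i j → B (Pi.single i 1) (Pi.single j 1) = -1)
    (hBnadj : ∀ i j : ι, i ≠ j → ¬ Adj i j → B (Pi.single i 1) (Pi.single j 1) = 0)
    (Γ : Type*) [Group Γ] [Fintype Γ]
    (φ : Γ →* Equiv.Perm ι)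
    (hφ : ∀ (γ : Γ) (i j : ι), Adj (φ γ i) (φ γ j) ↔ Adj i j)
    (orb : ι → Finset ι)
    (horb : ∀ i : ι, orb i = Finset.image (fun γ : Γ => φ γ i) Finset.univ)
    (e : ι → (ι → ℚ))
    (he : ∀ i : ι, e i = (((orb i).card : ℚ))⁻¹ • ∑ k ∈ orb i, Pi.single k (1 : ℚ))
    (j : ι)
    (hnonadj : ∀ k ∈ orb j, ∀ l ∈ orb j, k ≠ l → ¬ Adj k l) :
    B (e j) (e j) = 2 / ((orb j).card : ℚ) ∧
    B (e j) (e j) ≠ 0 ∧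
    (∀ i : ι, i ∉ orb j →
      2 * B (e j) (e i) / B (e j) (e j)
        = ∑ k ∈ orb j, B (Pi.single k 1) (Pi.single i 1)) := by
  have hmem : ∀ i : ι, i ∈ orb i := by
    intro i
    rw [horb]
    exact Finset.mem_image.2 ⟨1, Finset.mem_univ _, by simp⟩
  have hcard : ∀ i : ι, ((orb i).card : ℚ) ≠ 0 := by
    intro i
    exact_mod_cast Finset.card_ne_zero_of_mem (hmem i)
  -- B is invariant under φ γ on basis vectors
  have hperm : ∀ (γ : Γ) (a b : ι),
      B (Pi.single (φ γ a) 1) (Pi.single (φ γ b) 1) = B (Pi.single a 1) (Pi.single b 1) := by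
    intro γ a b
    by_cases hab : a = b
    · subst hab; rw [hBdiag, hBdiag]
    · have h' : φ γ a ≠ φ γ b := fun h => hab ((φ γ).injective h)
      by_cases hadj : Adj a b
      · rw [hBadj _ _ h' ((hφ γ a b).2 hadj), hBadj _ _ hab hadj]
      · rw [hBnadj _ _ h' (fun h => hadj ((hφ γ a b).1 h)), hBnadj _ _ hab hadj]
  -- orb j is invariant under φ γ
  have horbmap : ∀ γ : Γ, Finset.image (φ γ) (orb j) = orb j := by
    intro γ
    ext x
    simp only [horb, Finset.mem_image, Finset.mem_univ, true_and]
    constructor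
    · rintro ⟨y, ⟨δ, rfl⟩, rfl⟩
      exact ⟨γ * δ, by simp [map_mul]⟩
    · rintro ⟨δ, rfl⟩
      exact ⟨φ (γ⁻¹ * δ) j, ⟨γ⁻¹ * δ, rfl⟩, by
        simp [map_mul]⟩
  -- invariance of the row-sum function
  have hg : ∀ (γ : Γ) (i : ι),
      ∑ k ∈ orb j, B (Pi.single k 1) (Pi.single (φ γ i) 1)
        = ∑ k ∈ orb j, B (Pi.single k 1) (Pi.single i 1) := by
    intro γ i
    conv_lhs => rw [← horbmap γ]
    rw [Finset.sum_image (fun a _ b _ h => (φ γ).injective h)]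
    exact Finset.sum_congr rfl fun k _ => hperm γ k i
  -- expansion of B (e j) (e i)
  have hexp : ∀ i : ι, B (e j) (e i)
      = (((orb j).card : ℚ))⁻¹ * (((orb i).card : ℚ))⁻¹ *
        ∑ k ∈ orb j, ∑ l ∈ orb i, B (Pi.single k 1) (Pi.single l 1) := by
    intro i
    rw [he j, he i]
    simp only [map_smul, map_sum, LinearMap.smul_apply, LinearMap.sum_apply,
      smul_eq_mul]
    rw [← Finset.mul_sum, Finset.sum_comm, ← mul_assoc, mul_comm (((orb i).card : ℚ))⁻¹]
  have h1 : B (e j) (e j) = 2 / ((orb j).card : ℚ) := by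
    rw [hexp j]
    have hinner : ∀ k ∈ orb j, ∑ l ∈ orb j, B (Pi.single k 1) (Pi.single l 1) = 2 := by
      intro k hk
      rw [Finset.sum_eq_single k]
      · exact hBdiag k
      · intro l hl hlk
        exact hBnadj _ _ (Ne.symm hlk) (hnonadj k hk l hl (Ne.symm hlk))
      · intro h; exact absurd hk h
    rw [Finset.sum_congr rfl hinner, Finset.sum_const, nsmul_eq_mul]
    rw [eq_div_iff (hcard j)]
    field_simp
  refine ⟨h1, by rw [h1]; positivity, ?_⟩
  intro i hi
  -- the row-sum is constant on orb i
  have hconst : ∀ l ∈ orb i,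
      ∑ k ∈ orb j, B (Pi.single k 1) (Pi.single l 1)
        = ∑ k ∈ orb j, B (Pi.single k 1) (Pi.single i 1) := by
    intro l hl
    rw [horb] at hl
    obtain ⟨γ, _, rfl⟩ := Finset.mem_image.1 hl
    exact hg γ i
  have h2 : B (e j) (e i) = (((orb j).card : ℚ))⁻¹ *
      ∑ k ∈ orb j, B (Pi.single k 1) (Pi.single i 1) := by
    rw [hexp i, Finset.sum_comm, Finset.sum_congr rfl hconst, Finset.sum_const, nsmul_eq_mul,
      mul_assoc, ← mul_assoc (((orb i).card : ℚ))⁻¹, inv_mul_cancel₀ (hcard i), one_mul]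
  rw [h1, h2]
  field_simp
end

section
/- In the folding setup, suppose the Γ-orbit of an index j ∈ ι is a pair Γ·j = {j, j'} with j ≠ j' and Adj(j, j'). Then B(e_j, e_j) = 1/2, and for every i ∈ ι with i ∉ Γ·j one has 2·B(e_j, e_i)/B(e_j, e_j) = 2 · Σ_{k ∈ Γ·j} B(f_k, f_i). -/
theorem stmt_2 (ι : Type*) [Fintype ι] [DecidableEq ι]
    (Adj : ι → ι → Prop)
    (hAdjSymm : ∀ i j, Adj i j → Adj j i)
    (hAdjIrr : ∀ i, ¬ Adj i i)
    (B : LinearMap.BilinForm ℚ (ι → ℚ))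
    (hBsymm : ∀ v w, B v w = B w v)
    (hBdiag : ∀ i : ι, B (Pi.single i 1) (Pi.single i 1) = 2)
    (hBadj : ∀ i j : ι, i ≠ j → Adj i j → B (Pi.single i 1) (Pi.single j 1) = -1)
    (hBnadj : ∀ i j : ι, i ≠ j → ¬ Adj i j → B (Pi.single i 1) (Pi.single j 1) = 0)
    (Γ : Type*) [Group Γ] [Fintype Γ]
    (φ : Γ →* Equiv.Perm ι)
    (hφ : ∀ (γ : Γ) (i j : ι), Adj (φ γ i) (φ γ j) ↔ Adj i j)
    (orb : ι → Finset ι)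
    (horb : ∀ i : ι, orb i = Finset.image (fun γ : Γ => φ γ i) Finset.univ)
    (e : ι → (ι → ℚ))
    (he : ∀ i : ι, e i = (((orb i).card : ℚ))⁻¹ • ∑ k ∈ orb i, Pi.single k (1 : ℚ))
    (j j' : ι)
    (hne : j ≠ j')
    (hadj : Adj j j')
    (hpair : orb j = {j, j'}) :
    B (e j) (e j) = 1 / 2 ∧
    (∀ i : ι, i ∉ orb j →
      2 * B (e j) (e i) / B (e j) (e j)
        = 2 * ∑ k ∈ orb j, B (Pi.single k 1) (Pi.single i 1)) := by
  -- B-invariance under Γ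
  have hBinv : ∀ (γ : Γ) (a b : ι),
      B (Pi.single (φ γ a) 1) (Pi.single (φ γ b) 1)
        = B (Pi.single a 1) (Pi.single b 1) := by
    intro γ a b
    by_cases hab : a = b
    · subst hab; rw [hBdiag, hBdiag]
    · have hab' : φ γ a ≠ φ γ b := fun h => hab ((φ γ).injective h)
      by_cases hAd : Adj a b
      · rw [hBadj _ _ hab' ((hφ γ a b).2 hAd), hBadj _ _ hab hAd]
      · rw [hBnadj _ _ hab' (fun h => hAd ((hφ γ a b).1 h)),
          hBnadj _ _ hab hAd]
  have hmem : ∀ i k : ι, k ∈ orb i ↔ ∃ γ : Γ, φ γ i = k := by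
    intro i k; rw [horb]; simp
  have hself : ∀ i : ι, i ∈ orb i := by
    intro i; rw [hmem]; exact ⟨1, by simp⟩
  have hstab : ∀ (γ : Γ) (i k : ι), k ∈ orb i → φ γ k ∈ orb i := by
    intro γ i k hk
    obtain ⟨δ, hδ⟩ := (hmem i k).1 hk
    exact (hmem i _).2 ⟨γ * δ, by simp [hδ]⟩
  -- bilinear expansion
  have hexp : ∀ (s t : Finset ι) (c d : ℚ),
      B (c • ∑ k ∈ s, Pi.single k (1:ℚ)) (d • ∑ l ∈ t, Pi.single l (1:ℚ))
        = c * d * ∑ k ∈ s, ∑ l ∈ t, B (Pi.single k 1) (Pi.single l 1) := by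
    intro s t c d
    simp only [map_smul, LinearMap.smul_apply, map_sum, LinearMap.sum_apply,
      smul_eq_mul]
    rw [← Finset.mul_sum, Finset.sum_comm]
    ring
  have hcard : ((orb j).card : ℚ) = 2 := by
    rw [hpair]; rw [Finset.card_insert_of_notMem (by simp [hne]), Finset.card_singleton]
    norm_num
  have hBej : B (e j) (e j) = 1 / 2 := by
    rw [he, hexp, hcard, hpair]
    rw [Finset.sum_pair hne, Finset.sum_pair hne, Finset.sum_pair hne]
    rw [hBdiag, hBdiag, hBadj _ _ hne hadj, hBadj _ _ hne.symm (hAdjSymm _ _ hadj)]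
    norm_num
  refine ⟨hBej, fun i hi => ?_⟩
  set m : ℚ := ((orb i).card : ℚ) with hm
  have hm0 : m ≠ 0 := by
    have : (orb i).Nonempty := ⟨i, hself i⟩
    simp [hm, Finset.card_ne_zero_of_mem (hself i)]
  have hconst : ∀ l ∈ orb i,
      (∑ k ∈ orb j, B (Pi.single k 1) (Pi.single l 1))
        = ∑ k ∈ orb j, B (Pi.single k 1) (Pi.single i 1) := by
    intro l hl
    obtain ⟨γ, hγ⟩ := (hmem i l).1 hl
    subst hγ
    refine (Finset.sum_equiv (φ γ) (fun k => ?_) (fun k hk => ?_)).symm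
    · constructor
      · exact hstab γ j k
      · intro h
        have := hstab γ⁻¹ j _ h
        simpa using this
    · exact (hBinv γ k i).symm
  have hsum : ∑ k ∈ orb j, ∑ l ∈ orb i, B (Pi.single k 1) (Pi.single l 1)
      = m * ∑ k ∈ orb j, B (Pi.single k 1) (Pi.single i 1) := by
    rw [Finset.sum_comm]
    rw [Finset.sum_congr rfl hconst, Finset.sum_const, nsmul_eq_mul, hm]
  rw [hBej, he j, he i, hexp, hcard, ← hm, hsum]
  field_simp
end

section
/- In the folding setup, assume that every Γ-orbit in ι either consists of pairwise non-adjacent vertices, or is a two-element orbit {j, j'} with Adj(j, j'). Then for all i, j ∈ ι the quantity e_j^∨(e_i) := 2·B(e_j, e_i)/B(e_j, e_j) is an integer, and the reflection ρ_j : V → V defined by ρ_j(x) = x − (2·B(x, e_j)/B(e_j, e_j))·e_j maps the ℤ-submodule Λ := span_ℤ{e_i : i ∈ ι} of V onto itself. -/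
theorem stmt_3 (ι : Type*) [Fintype ι] [DecidableEq ι]
    (Adj : ι → ι → Prop)
    (hAdjSymm : ∀ i j, Adj i j → Adj j i)
    (hAdjIrr : ∀ i, ¬ Adj i i)
    (B : LinearMap.BilinForm ℚ (ι → ℚ))
    (hBsymm : ∀ v w, B v w = B w v)
    (hBdiag : ∀ i : ι, B (Pi.single i 1) (Pi.single i 1) = 2)
    (hBadj : ∀ i j : ι, i ≠ j → Adj i j → B (Pi.single i 1) (Pi.single j 1) = -1)
    (hBnadj : ∀ i j : ι, i ≠ j → ¬ Adj i j → B (Pi.single i 1) (Pi.single j 1) = 0)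
    (Γ : Type*) [Group Γ] [Fintype Γ]
    (φ : Γ →* Equiv.Perm ι)
    (hφ : ∀ (γ : Γ) (i j : ι), Adj (φ γ i) (φ γ j) ↔ Adj i j)
    (orb : ι → Finset ι)
    (horb : ∀ i : ι, orb i = Finset.image (fun γ : Γ => φ γ i) Finset.univ)
    (e : ι → (ι → ℚ))
    (he : ∀ i : ι, e i = (((orb i).card : ℚ))⁻¹ • ∑ k ∈ orb i, Pi.single k (1 : ℚ))
    (horbits : ∀ j : ι,
      (∀ k ∈ orb j, ∀ l ∈ orb j, k ≠ l → ¬ Adj k l) ∨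
      (∃ j' : ι, j ≠ j' ∧ Adj j j' ∧ orb j = {j, j'}))
    (Λ : Submodule ℤ (ι → ℚ))
    (hΛ : Λ = Submodule.span ℤ (Set.range e)) :
    (∀ i j : ι, ∃ n : ℤ, 2 * B (e j) (e i) / B (e j) (e j) = (n : ℚ)) ∧
    (∀ j : ι,
      (fun x : ι → ℚ => x - (2 * B x (e j) / B (e j) (e j)) • e j) '' (Λ : Set (ι → ℚ))
        = (Λ : Set (ι → ℚ))) := by
  classical
  have hmem : ∀ i, i ∈ orb i := by
    intro i
    rw [horb]
    exact Finset.mem_image.2 ⟨1, Finset.mem_univ _, by simp⟩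
  have hcard : ∀ i, ((orb i).card : ℚ) ≠ 0 := by
    intro i
    exact Nat.cast_ne_zero.2 (Finset.card_pos.2 ⟨i, hmem i⟩).ne'
  have hBinv : ∀ (γ : Γ) (k l : ι),
      B (Pi.single (φ γ k) 1) (Pi.single (φ γ l) 1) = B (Pi.single k 1) (Pi.single l 1) := by
    intro γ k l
    by_cases hkl : k = l
    · subst hkl; rw [hBdiag, hBdiag]
    · have hkl' : φ γ k ≠ φ γ l := fun h => hkl ((φ γ).injective h)
      by_cases ha : Adj k l
      · rw [hBadj _ _ hkl' ((hφ γ k l).2 ha), hBadj _ _ hkl ha]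
      · rw [hBnadj _ _ hkl' (fun h => ha ((hφ γ k l).1 h)), hBnadj _ _ hkl ha]
  have htrans : ∀ (i l : ι), l ∈ orb i → ∃ γ : Γ, φ γ i = l := by
    intro i l hl
    rw [horb] at hl
    obtain ⟨γ, -, hγ⟩ := Finset.mem_image.1 hl
    exact ⟨γ, hγ⟩
  have horbim : ∀ (γ : Γ) (j : ι), Finset.image (φ γ) (orb j) = orb j := by
    intro γ j
    ext x
    simp only [horb, Finset.mem_image, Finset.mem_univ, true_and]
    constructor
    · rintro ⟨y, ⟨γ', rfl⟩, rfl⟩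
      exact ⟨γ * γ', by rw [map_mul, Equiv.Perm.mul_apply]⟩
    · rintro ⟨γ', rfl⟩
      exact ⟨φ (γ⁻¹ * γ') j, ⟨γ⁻¹ * γ', rfl⟩, by
        rw [← Equiv.Perm.mul_apply, ← map_mul, mul_inv_cancel_left]⟩
  have hS : ∀ (j i l : ι), l ∈ orb i →
      (∑ k ∈ orb j, B (Pi.single k 1) (Pi.single l 1))
        = ∑ k ∈ orb j, B (Pi.single k 1) (Pi.single i 1) := by
    intro j i l hl
    obtain ⟨γ, rfl⟩ := htrans i l hl
    calc (∑ k ∈ orb j, B (Pi.single k 1) (Pi.single (φ γ i) 1))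
        = ∑ k ∈ Finset.image (φ γ) (orb j), B (Pi.single k 1) (Pi.single (φ γ i) 1) := by
          rw [horbim]
      _ = ∑ k ∈ orb j, B (Pi.single (φ γ k) 1) (Pi.single (φ γ i) 1) :=
          Finset.sum_image (fun a _ b _ h => (φ γ).injective h)
      _ = ∑ k ∈ orb j, B (Pi.single k 1) (Pi.single i 1) := by
          exact Finset.sum_congr rfl fun k _ => hBinv γ k i
  have hBe : ∀ j i, B (e j) (e i)
      = (∑ k ∈ orb j, B (Pi.single k 1) (Pi.single i 1)) / (orb j).card := by
    intro j i
    rw [he j, he i]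
    simp only [map_smul, map_sum, LinearMap.smul_apply, LinearMap.sum_apply,
      Finset.sum_apply, smul_eq_mul]
    rw [← Finset.mul_sum]
    rw [Finset.sum_congr rfl (fun l hl => hS j i l hl), Finset.sum_const, nsmul_eq_mul]
    have h1 := hcard i
    have h2 := hcard j
    field_simp
  have hSjj : ∀ j, (∑ k ∈ orb j, B (Pi.single k 1) (Pi.single j 1)) = 1 ∨
      (∑ k ∈ orb j, B (Pi.single k 1) (Pi.single j 1)) = 2 := by
    intro j
    rcases horbits j with h | ⟨j', hne, hadj, horbeq⟩
    · right
      rw [Finset.sum_eq_single_of_mem j (hmem j)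
        (fun k hk hkj => hBnadj k j hkj (h k hk j (hmem j) hkj))]
      exact hBdiag j
    · left
      rw [horbeq, Finset.sum_pair hne, hBdiag, hBadj j' j (Ne.symm hne) (hAdjSymm j j' hadj)]
      norm_num
  have hSint : ∀ j i, ∃ m : ℤ,
      (∑ k ∈ orb j, B (Pi.single k 1) (Pi.single i 1)) = (m : ℚ) := by
    intro j i
    have hterm : ∀ k : ι, ∃ m : ℤ, B (Pi.single k 1) (Pi.single i 1) = (m : ℚ) := by
      intro k
      by_cases hki : k = i
      · subst hki; exact ⟨2, by rw [hBdiag]; norm_num⟩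
      · by_cases ha : Adj k i
        · exact ⟨-1, by rw [hBadj k i hki ha]; norm_num⟩
        · exact ⟨0, by rw [hBnadj k i hki ha]; norm_num⟩
    choose m hm using hterm
    exact ⟨∑ k ∈ orb j, m k, by push_cast; exact Finset.sum_congr rfl fun k _ => hm k⟩
  have hBjj_ne : ∀ j, B (e j) (e j) ≠ 0 := by
    intro j
    rw [hBe]
    rcases hSjj j with h | h <;> rw [h] <;>
      exact div_ne_zero (by norm_num) (hcard j)
  have hint : ∀ i j : ι, ∃ n : ℤ, 2 * B (e j) (e i) / B (e j) (e j) = (n : ℚ) := by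
    intro i j
    obtain ⟨m, hm⟩ := hSint j i
    rcases hSjj j with h | h
    · refine ⟨2 * m, ?_⟩
      rw [hBe, hBe, hm, h]
      have h2 := hcard j
      push_cast
      field_simp
    · refine ⟨m, ?_⟩
      rw [hBe, hBe, hm, h]
      have h2 := hcard j
      field_simp
  refine ⟨hint, ?_⟩
  intro j
  have hcne := hBjj_ne j
  set ρ : (ι → ℚ) →ₗ[ℚ] (ι → ℚ) :=
    LinearMap.id - ((2 / B (e j) (e j)) • (B.flip (e j))).smulRight (e j) with hρ
  have hρapp : ∀ x, ρ x = x - (2 * B x (e j) / B (e j) (e j)) • e j := by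
    intro x
    simp only [hρ, LinearMap.sub_apply, LinearMap.id_apply, LinearMap.smulRight_apply,
      LinearMap.smul_apply, LinearMap.flip_apply, LinearMap.BilinForm.flip_apply, smul_eq_mul]
    congr 1
    ring
  have hρinv : ∀ x, ρ (ρ x) = x := by
    intro x
    rw [hρapp, hρapp]
    have hB1 : B (x - (2 * B x (e j) / B (e j) (e j)) • e j) (e j) = - B x (e j) := by
      rw [map_sub, map_smul, LinearMap.sub_apply, LinearMap.smul_apply, smul_eq_mul]
      field_simp
      ring
    rw [hB1]
    have hcoef : 2 * (- B x (e j)) / B (e j) (e j)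
        = -(2 * B x (e j) / B (e j) (e j)) := by ring
    rw [hcoef, neg_smul, sub_neg_eq_add, sub_add_cancel]
  have hρΛ : ∀ x ∈ Λ, ρ x ∈ Λ := by
    have hgen : ∀ i, ρ (e i) ∈ Λ := by
      intro i
      obtain ⟨n, hn⟩ := hint i j
      rw [hρapp, hBsymm (e i) (e j), hn, Int.cast_smul_eq_zsmul]
      rw [hΛ]
      exact sub_mem (Submodule.subset_span ⟨i, rfl⟩)
        (Submodule.smul_mem _ n (Submodule.subset_span ⟨j, rfl⟩))
    intro x hx
    rw [hΛ] at hx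
    induction hx using Submodule.span_induction with
    | mem v hv => obtain ⟨i, rfl⟩ := hv; exact hgen i
    | zero => rw [map_zero]; exact Λ.zero_mem
    | add u v _ _ hu hv => rw [map_add]; exact Λ.add_mem hu hv
    | smul n u _ hu => rw [map_zsmul]; exact Λ.smul_mem n hu
  have hfun : (fun x : ι → ℚ => x - (2 * B x (e j) / B (e j) (e j)) • e j) = ⇑ρ :=
    funext fun x => (hρapp x).symm
  rw [hfun]
  ext x
  constructor
  · rintro ⟨y, hy, rfl⟩
    exact hρΛ y hy
  · intro hx
    exact ⟨ρ x, hρΛ x hx, hρinv x⟩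
end

section
/- Let V be a finite-dimensional vector space over ℚ, B a positive definite symmetric bilinear form on V (B(v, v) > 0 for all v ≠ 0), and Λ ⊆ V a finitely generated ℤ-submodule which spans V over ℚ. Then any group G of linear automorphisms of V satisfying B(g(v), g(w)) = B(v, w) for all v, w ∈ V and g(Λ) = Λ for all g ∈ G is finite. -/
private lemma bform_nonneg {V : Type*} [AddCommGroup V] [Module ℚ V]
    (B : LinearMap.BilinForm ℚ V) (hpos : ∀ v : V, v ≠ 0 → 0 < B v v) (x : V) :
    0 ≤ B x x := by
  rcases eq_or_ne x 0 with h | h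
  · simp [h]
  · exact (hpos x h).le

private lemma bform_cs {V : Type*} [AddCommGroup V] [Module ℚ V]
    (B : LinearMap.BilinForm ℚ V) (hsymm : ∀ v w : V, B v w = B w v)
    (hpos : ∀ v : V, v ≠ 0 → 0 < B v v) (x y : V) :
    (B x y)^2 ≤ B x x * B y y := by
  rcases eq_or_ne y 0 with h | h
  · simp [h]
  · have hy := hpos y h
    have h0 : 0 ≤ B (B y y • x - B x y • y) (B y y • x - B x y • y) :=
      bform_nonneg B hpos _
    have expand : B (B y y • x - B x y • y) (B y y • x - B x y • y)
        = B y y * B y y * B x x - B y y * B x y * B x y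
          - B x y * B y y * B y x + B x y * B x y * B y y := by
      simp only [map_sub, map_smul, LinearMap.sub_apply, LinearMap.smul_apply, smul_eq_mul]
      ring
    rw [expand, hsymm y x] at h0
    nlinarith [h0, hy]

private lemma bounded_finite {V : Type*} [AddCommGroup V] [Module ℚ V] [FiniteDimensional ℚ V]
    (B : LinearMap.BilinForm ℚ V)
    (hsymm : ∀ v w : V, B v w = B w v)
    (hpos : ∀ v : V, v ≠ 0 → 0 < B v v)
    (Λ : Submodule ℤ V) (hfg : Λ.FG)
    (hspan : Submodule.span ℚ (Λ : Set V) = ⊤) (c : ℚ) :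
    {x : V | x ∈ Λ ∧ B x x ≤ c}.Finite := by
  haveI : Module.Finite ℤ Λ := Module.Finite.iff_fg.mpr hfg
  haveI : NoZeroSMulDivisors ℤ V := by
    constructor
    intro n v h
    have h2 : (n : ℚ) • v = 0 := by
      rw [Int.cast_smul_eq_zsmul]; exact h
    rcases smul_eq_zero.mp h2 with h3 | h3
    · exact Or.inl (by exact_mod_cast h3)
    · exact Or.inr h3
  haveI : Module.Free ℤ Λ := Module.free_of_finite_type_torsion_free'
  set ι := Module.Free.ChooseBasisIndex ℤ Λ with hι
  let b : Module.Basis ι ℤ Λ := Module.Free.chooseBasis ℤ Λ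
  let v : ι → V := fun i => (b i : V)
  have hcomp : (Λ.subtype ∘ b) = v := rfl
  have hindZ : LinearIndependent ℤ v := by
    rw [← hcomp]
    exact b.linearIndependent.map' Λ.subtype (Submodule.ker_subtype Λ)
  have hindQ : LinearIndependent ℚ v := (LinearIndependent.iff_fractionRing ℤ ℚ).mp hindZ
  have hΛ : Λ = Submodule.span ℤ (Set.range v) := by
    conv_lhs => rw [← Submodule.map_subtype_top Λ, ← b.span_eq, Submodule.map_span]
    rw [← Set.range_comp, hcomp]
  have hsp : Submodule.span ℚ (Set.range v) = ⊤ := by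
    apply le_antisymm le_top
    rw [← hspan]
    apply Submodule.span_le.mpr
    intro x hx
    have hx' : x ∈ Submodule.span ℤ (Set.range v) := by rw [← hΛ]; exact hx
    exact Submodule.span_subset_span ℤ ℚ _ hx'
  let bQ : Module.Basis ι ℚ V := Module.Basis.mk hindQ (by rw [hsp])
  have hB : B.Nondegenerate := by
    refine ⟨?_, ?_⟩
    · intro m hm
      by_contra h
      exact (hpos m h).ne' (hm m)
    · intro m hm
      by_contra h
      exact (hpos m h).ne' (hm m)
  let d : ι → V := fun i => (B.toDual hB).symm (bQ.coord i)
  have key : ∀ i (x : V), B (d i) x = bQ.coord i x := fun i x =>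
    LinearMap.BilinForm.apply_toDual_symm_apply (bQ.coord i) x
  let M : ι → ℤ := fun i => ⌈B (d i) (d i) * max c 0⌉
  rw [← Set.finite_coe_iff]
  haveI : ∀ i, Finite ↥(Set.Icc (-(M i)) (M i)) := fun i => (Set.finite_Icc _ _).to_subtype
  set S := {x : V | x ∈ Λ ∧ B x x ≤ c} with hs
  have coord_eq : ∀ (x : V) (hx : x ∈ Λ) (i : ι),
      (((b.repr ⟨x, hx⟩) i : ℤ) : ℚ) = B (d i) x := by
    intro x hx i
    have hrepr : x = ∑ j, ((b.repr ⟨x, hx⟩ j : ℤ) : ℚ) • bQ j := by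
      have h1 : (⟨x, hx⟩ : Λ) = ∑ j, b.repr ⟨x, hx⟩ j • b j := (b.sum_repr ⟨x, hx⟩).symm
      have h2 : x = Λ.subtype (∑ j, b.repr ⟨x, hx⟩ j • b j) := by
        conv_lhs => rw [show x = Λ.subtype ⟨x, hx⟩ from rfl, h1]
      conv_lhs => rw [h2]
      rw [map_sum]
      apply Finset.sum_congr rfl
      intro j _
      rw [map_zsmul, Int.cast_smul_eq_zsmul]
      congr 1
      simp [bQ, v, Module.Basis.coe_mk]
    rw [key]
    conv_rhs => rw [hrepr]
    simp [Module.Basis.coord_apply, map_sum, Module.Basis.repr_self, Finsupp.single_apply]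
  have bound : ∀ (x : ↥S) (i : ι), b.repr ⟨x.1, x.2.1⟩ i ∈ Set.Icc (-(M i)) (M i) := by
    intro x i
    have hcs := bform_cs B hsymm hpos (d i) x.1
    have hxx : B x.1 x.1 ≤ max c 0 := le_trans x.2.2 (le_max_left _ _)
    have hdd : 0 ≤ B (d i) (d i) := bform_nonneg B hpos _
    have h1 : (B (d i) x.1)^2 ≤ B (d i) (d i) * max c 0 :=
      le_trans hcs (mul_le_mul_of_nonneg_left hxx hdd)
    rw [← coord_eq x.1 x.2.1 i] at h1
    set m := b.repr ⟨x.1, x.2.1⟩ i with hm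
    have h2 : ((m^2 : ℤ) : ℚ) ≤ ((M i : ℤ) : ℚ) := by
      push_cast
      exact le_trans (by linarith) (Int.le_ceil _)
    have h3 : m^2 ≤ M i := by exact_mod_cast h2
    have h4 : |m| ≤ M i := le_trans (by nlinarith [sq_nonneg (|m| - 1), abs_nonneg m, sq_abs m]) h3
    exact Set.mem_Icc.mpr (abs_le.mp h4)
  let f : ↥S → ∀ i, ↥(Set.Icc (-(M i)) (M i)) := fun x i => ⟨b.repr ⟨x.1, x.2.1⟩ i, bound x i⟩
  apply Finite.of_injective f
  intro x y hxy
  have : ∀ i, b.repr ⟨x.1, x.2.1⟩ i = b.repr ⟨y.1, y.2.1⟩ i := by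
    intro i
    exact congrArg Subtype.val (congrFun hxy i)
  have hrepr : b.repr ⟨x.1, x.2.1⟩ = b.repr ⟨y.1, y.2.1⟩ := Finsupp.ext this
  have := b.repr.injective hrepr
  have h5 : x.1 = y.1 := congrArg (fun z : Λ => (z : V)) this
  exact Subtype.ext h5

theorem stmt_7 (V : Type*) [AddCommGroup V] [Module ℚ V] [FiniteDimensional ℚ V]
    (B : LinearMap.BilinForm ℚ V)
    (hsymm : ∀ v w : V, B v w = B w v)
    (hpos : ∀ v : V, v ≠ 0 → 0 < B v v)
    (Λ : Submodule ℤ V)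
    (hfg : Λ.FG)
    (hspan : Submodule.span ℚ (Λ : Set V) = ⊤)
    (G : Subgroup (V ≃ₗ[ℚ] V))
    (hGB : ∀ g ∈ G, ∀ v w : V, B (g v) (g w) = B v w)
    (hGΛ : ∀ g ∈ G, (g : V → V) '' (Λ : Set V) = (Λ : Set V)) :
    Finite G := by
  obtain ⟨S, hS⟩ := hfg
  have hSsub : (S : Set V) ⊆ (Λ : Set V) := by
    rw [← hS]; exact Submodule.subset_span
  have hSspan : Submodule.span ℚ (S : Set V) = ⊤ := by
    apply le_antisymm le_top
    rw [← hspan]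
    apply Submodule.span_le.mpr
    intro x hx
    have hx' : x ∈ Submodule.span ℤ (S : Set V) := by rw [hS]; exact hx
    exact Submodule.span_subset_span ℤ ℚ _ hx'
  haveI : ∀ s : {x // x ∈ S}, Finite ↥{x : V | x ∈ Λ ∧ B x x ≤ B s.1 s.1} := fun s =>
    (bounded_finite B hsymm hpos Λ ⟨S, hS⟩ hspan (B s.1 s.1)).to_subtype
  let f : G → ∀ s : {x // x ∈ S}, ↥{x : V | x ∈ Λ ∧ B x x ≤ B s.1 s.1} := fun g s =>
    ⟨g.1 s.1, by
      constructor
      · have : (g.1 : V → V) s.1 ∈ (Λ : Set V) := by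
          rw [← hGΛ g.1 g.2]
          exact ⟨s.1, hSsub s.2, rfl⟩
        exact this
      · exact (hGB g.1 g.2 s.1 s.1).le⟩
  apply Finite.of_injective f
  intro g g' h
  apply Subtype.ext
  apply LinearEquiv.toLinearMap_injective
  apply LinearMap.ext_on hSspan
  intro x hx
  have h1 := congrFun h ⟨x, hx⟩
  have h2 : g.1 x = g'.1 x := congrArg (fun z : {y : V | y ∈ Λ ∧ B y y ≤ B x x} => (z : V)) h1
  exact h2
end
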